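/- Let Z be a real Gaussian random variable with mean m and variance v > 0, and let K ∈ ℝ. Then E[max(Z − K, 0)] = √(v/(2π)) · exp(−(m − K)²/(2v)) + (m − K) · Φ((m − K)/√v), where Φ denotes the cumulative distribution function of the standard normal distribution. -/

import Mathlib

open MeasureTheory ProbabilityTheory Real
open scoped NNReal

/-- The standard normal cumulative distribution function
`Φ(x) = (1/√(2π)) ∫_{-∞}^x e^{-y²/2} dy`. -/
noncomputable def stdNormalCDF (x : ℝ) : ℝ :=
  ∫ y in Set.Iic x, (Real.sqrt (2 * Real.pi))⁻¹ * Real.exp (-(y ^ 2) / 2)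

section aux

open Filter Set

lemma phi_int : Integrable (fun x : ℝ => (Real.sqrt (2 * π))⁻¹ * Real.exp (-(x ^ 2) / 2)) := by
  have h : (fun x : ℝ => (Real.sqrt (2 * π))⁻¹ * Real.exp (-(x ^ 2) / 2))
      = fun x : ℝ => (Real.sqrt (2 * π))⁻¹ * Real.exp (-(1/2 : ℝ) * x ^ 2) := by
    funext x; ring_nf
  rw [h]
  exact (integrable_exp_neg_mul_sq (by norm_num)).const_mul _

lemma xphi_int : Integrable (fun x : ℝ => x * Real.exp (-(x ^ 2) / 2)) := by
  have h : (fun x : ℝ => x * Real.exp (-(x ^ 2) / 2))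
      = fun x : ℝ => x * Real.exp (-(1/2 : ℝ) * x ^ 2) := by
    funext x; ring_nf
  rw [h]
  exact integrable_mul_exp_neg_mul_sq (by norm_num)

lemma hasDerivAt_negexp (x : ℝ) :
    HasDerivAt (fun y : ℝ => -Real.exp (-(y ^ 2) / 2)) (x * Real.exp (-(x ^ 2) / 2)) x := by
  have h1 : HasDerivAt (fun y : ℝ => -(y ^ 2) / 2) (-x) x := by
    have h := (hasDerivAt_pow 2 x).neg.div_const 2
    refine h.congr_deriv ?_
    simp
    ring
  have h2 := h1.exp.neg
  refine h2.congr_deriv ?_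
  ring

lemma integral_Ioi_xexp (c : ℝ) :
    ∫ x in Ioi c, x * Real.exp (-(x ^ 2) / 2) = Real.exp (-(c ^ 2) / 2) := by
  have ht : Tendsto (fun y : ℝ => -Real.exp (-(y ^ 2) / 2)) atTop (nhds 0) := by
    rw [show (0 : ℝ) = -0 by ring]
    apply Tendsto.neg
    apply Real.tendsto_exp_atBot.comp
    have h1 : Tendsto (fun y : ℝ => y ^ 2) atTop atTop := tendsto_pow_atTop two_ne_zero
    have h2 : Tendsto (fun y : ℝ => -(y ^ 2)) atTop atBot := tendsto_neg_atTop_atBot.comp h1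
    have := h2.atBot_div_const (by norm_num : (0:ℝ) < 2)
    exact this
  have := integral_Ioi_of_hasDerivAt_of_tendsto' (a := c) (fun x _ => hasDerivAt_negexp x)
    xphi_int.integrableOn ht
  rw [this]; ring

lemma integral_Ioi_phi (a : ℝ) :
    ∫ x in Ioi (-a), (Real.sqrt (2 * π))⁻¹ * Real.exp (-(x ^ 2) / 2) = stdNormalCDF a := by
  rw [stdNormalCDF]
  rw [← integral_comp_neg_Iic]
  simp

lemma core (a : ℝ) :
    ∫ x, max (x + a) 0 * ((Real.sqrt (2 * π))⁻¹ * Real.exp (-(x ^ 2) / 2))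
      = (Real.sqrt (2 * π))⁻¹ * Real.exp (-(a ^ 2) / 2) + a * stdNormalCDF a := by
  have heq : (fun x : ℝ => max (x + a) 0 * ((Real.sqrt (2 * π))⁻¹ * Real.exp (-(x ^ 2) / 2)))
      = (Ioi (-a)).indicator
        (fun x => (x + a) * ((Real.sqrt (2 * π))⁻¹ * Real.exp (-(x ^ 2) / 2))) := by
    funext x
    by_cases h : -a < x
    · rw [Set.indicator_apply, if_pos (Set.mem_Ioi.mpr h), max_eq_left (by linarith)]
    · rw [Set.indicator_apply, if_neg (fun hm => h (Set.mem_Ioi.mp hm)),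
        max_eq_right (by linarith), zero_mul]
  rw [heq, integral_indicator measurableSet_Ioi]
  have hsplit : ∀ x : ℝ, (x + a) * ((Real.sqrt (2 * π))⁻¹ * Real.exp (-(x ^ 2) / 2))
      = (Real.sqrt (2 * π))⁻¹ * (x * Real.exp (-(x ^ 2) / 2))
        + a * ((Real.sqrt (2 * π))⁻¹ * Real.exp (-(x ^ 2) / 2)) := fun x => by ring
  simp_rw [hsplit]
  rw [integral_add ((xphi_int.const_mul _).integrableOn) ((phi_int.const_mul a).integrableOn)]
  rw [integral_const_mul, integral_const_mul, integral_Ioi_xexp, integral_Ioi_phi]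
  rw [show (-a : ℝ) ^ 2 = a ^ 2 by ring]

end aux

/-- If `Z` is Gaussian with mean `m` and variance `v > 0`, then
`E[max(Z - K, 0)] = √(v/(2π)) exp(-(m-K)²/(2v)) + (m-K) Φ((m-K)/√v)`. -/
theorem gaussian_call_price
    {Ω : Type*} [MeasurableSpace Ω] (μ : Measure Ω) [IsProbabilityMeasure μ]
    (Z : Ω → ℝ) (m : ℝ) (v : ℝ≥0) (hv : 0 < v)
    (hZ : μ.map Z = gaussianReal m v) (K : ℝ) :
    ∫ ω, max (Z ω - K) 0 ∂μ
      = Real.sqrt (v / (2 * Real.pi)) * Real.exp (-((m - K) ^ 2) / (2 * v))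
        + (m - K) * stdNormalCDF ((m - K) / Real.sqrt v) := by
  have hvR : (0 : ℝ) < (v : ℝ) := hv
  have hs : (0 : ℝ) < Real.sqrt v := Real.sqrt_pos.mpr hvR
  set s : ℝ := Real.sqrt v with hs_def
  set a : ℝ := (m - K) / s with ha_def
  have hZm : AEMeasurable Z μ := aemeasurable_of_map_neZero (by rw [hZ]; infer_instance)
  -- map structure of the gaussian
  have h1 : (gaussianReal 0 1).map (s * ·) = gaussianReal 0 v := by
    rw [gaussianReal_map_const_mul]
    congr 1
    · simp
    · rw [mul_one]
      ext
      push_cast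
      exact Real.sq_sqrt hvR.le
  have hmap : gaussianReal m v = (gaussianReal 0 1).map (fun x => s * x + m) := by
    calc gaussianReal m v = gaussianReal (0 + m) v := by rw [zero_add]
      _ = (gaussianReal 0 v).map (· + m) := (gaussianReal_map_add_const m).symm
      _ = ((gaussianReal 0 1).map (s * ·)).map (· + m) := by rw [h1]
      _ = (gaussianReal 0 1).map (fun x => s * x + m) := by
          rw [Measure.map_map (by fun_prop) (by fun_prop)]
          rfl
  have hcont : Continuous (fun x : ℝ => max (x - K) 0) :=
    (continuous_id.sub continuous_const).max continuous_const
  have hcont2 : Continuous (fun y : ℝ => max (s * y + m - K) 0) :=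
    (((continuous_const.mul continuous_id).add continuous_const).sub continuous_const).max
      continuous_const
  have step1 : ∫ ω, max (Z ω - K) 0 ∂μ
      = ∫ y, max (s * y + m - K) 0 ∂(gaussianReal 0 1) := by
    rw [← integral_map hZm hcont.aestronglyMeasurable, hZ, hmap,
      integral_map (φ := fun x : ℝ => s * x + m) (by fun_prop) hcont.aestronglyMeasurable]
  -- density
  have step2 : ∫ y, max (s * y + m - K) 0 ∂(gaussianReal 0 1)
      = ∫ y, gaussianPDFReal 0 1 y * max (s * y + m - K) 0 := by
    rw [gaussianReal_of_var_ne_zero 0 one_ne_zero]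
    have hpdf : gaussianPDF 0 1 = fun x => ((gaussianPDFReal 0 1 x).toNNReal : ENNReal) := by
      funext x; rw [gaussianPDF_def]; rfl
    rw [hpdf, integral_withDensity_eq_integral_smul
      ((measurable_gaussianPDFReal 0 1).real_toNNReal)]
    congr 1
    funext y
    rw [NNReal.smul_def, smul_eq_mul, Real.coe_toNNReal _ (gaussianPDFReal_nonneg 0 1 y)]
  have hpdfform : ∀ y : ℝ, gaussianPDFReal 0 1 y
      = (Real.sqrt (2 * π))⁻¹ * Real.exp (-(y ^ 2) / 2) := by
    intro y
    rw [gaussianPDFReal_def]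
    norm_num
  have step3 : ∫ y, gaussianPDFReal 0 1 y * max (s * y + m - K) 0
      = s * ∫ y, max (y + a) 0 * ((Real.sqrt (2 * π))⁻¹ * Real.exp (-(y ^ 2) / 2)) := by
    rw [← integral_const_mul]
    congr 1
    funext y
    rw [hpdfform y]
    have h0 : s * y + m - K = s * (y + a) := by
      rw [ha_def]; field_simp; ring
    have hmax : s * ((y + a) ⊔ 0) = (s * (y + a)) ⊔ 0 := by
      rw [mul_max_of_nonneg _ _ hs.le, mul_zero]
    rw [h0, ← hmax]
    ring
  rw [step1, step2, step3, core a]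
  have hsa : s * a = m - K := by rw [ha_def]; field_simp
  have ha2 : a ^ 2 = (m - K) ^ 2 / v := by
    rw [ha_def, div_pow, hs_def, Real.sq_sqrt hvR.le]
  have hsqrt : s * (Real.sqrt (2 * π))⁻¹ = Real.sqrt ((v : ℝ) / (2 * π)) := by
    rw [Real.sqrt_div hvR.le, div_eq_mul_inv, hs_def]
  rw [mul_add, ← mul_assoc, ← mul_assoc, hsa, hsqrt, ha2,
    show -((m - K) ^ 2 / (v : ℝ)) / 2 = -((m - K) ^ 2) / (2 * (v : ℝ)) by ring]
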